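/- Euler's identity: (−xq; q)_∞ = ∑_{m≥0} q^{m(m+1)/2} x^m / (q;q)_m as formal power series, where (−xq;q)_∞ = ∏_{j≥0}(1 + x q^{j+1}) and (q;q)_m = ∏_{0≤j<m}(1−q^{j+1}). -/

import Mathlib

open Finset PowerSeries

/-- `(q;q)_m = ∏_{0 ≤ j < m} (1 - q^{j+1})`. -/
noncomputable def qPoch (n : ℕ) : PowerSeries ℚ :=
  ∏ j ∈ Finset.range n, (1 - (PowerSeries.X : PowerSeries ℚ) ^ (j + 1))

/-- The power series `q` in `ℚ⟦q⟧`. -/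
noncomputable def qq : PowerSeries ℚ := PowerSeries.X

/-- The infinite product `(-xq; q)_∞ = ∏_{j ≥ 0} (1 + x q^{j+1})` in `ℚ⟦q⟧⟦x⟧`,
defined coefficientwise: the coefficient of `x^m q^N` is that of any partial
product with more than `N` factors (these stabilize). -/
noncomputable def eulerProd : PowerSeries (PowerSeries ℚ) :=
  PowerSeries.mk fun m => PowerSeries.mk fun N =>
    PowerSeries.coeff (R := ℚ) N (PowerSeries.coeff (R := PowerSeries ℚ) m
      (∏ j ∈ Finset.range (N + 1), (1 + PowerSeries.C (R := PowerSeries ℚ) (qq ^ (j + 1)) * PowerSeries.X)))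

/-- Partial products. -/
noncomputable def eulerP (n : ℕ) : PowerSeries (PowerSeries ℚ) :=
  ∏ j ∈ Finset.range n, (1 + PowerSeries.C (R := PowerSeries ℚ) (qq ^ (j + 1)) * PowerSeries.X)

/-- Coefficient of `x^m` in the `n`-th partial product. -/
noncomputable def ec (n m : ℕ) : PowerSeries ℚ :=
  PowerSeries.coeff (R := PowerSeries ℚ) m (eulerP n)

lemma tri_succ (n : ℕ) : (n + 1) * (n + 1 + 1) / 2 = n * (n + 1) / 2 + (n + 1) := by
  have h1 : (n + 1) * (n + 1 + 1) = n * (n + 1) + 2 * (n + 1) := by ring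
  obtain ⟨c, hc⟩ := Nat.even_mul_succ_self n
  omega

lemma ec_zero (n : ℕ) : ec n 0 = 1 := by
  simp only [ec, eulerP, PowerSeries.coeff_zero_eq_constantCoeff, map_prod]
  simp

lemma ec_rec (n m : ℕ) : ec (n + 1) (m + 1) = ec n (m + 1) + qq ^ (n + 1) * ec n m := by
  have h : eulerP (n + 1) = eulerP n + PowerSeries.C (R := PowerSeries ℚ) (qq ^ (n + 1)) * (eulerP n * X) := by
    rw [eulerP, Finset.prod_range_succ, ← eulerP]
    ring
  simp only [ec, h, map_add, PowerSeries.coeff_C_mul, PowerSeries.coeff_succ_mul_X]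

lemma ec_gt : ∀ n m : ℕ, n < m → ec n m = 0 := by
  intro n
  induction n with
  | zero =>
    intro m hm
    simp only [ec, eulerP, Finset.range_zero, Finset.prod_empty]
    rw [PowerSeries.coeff_one, if_neg (by omega)]
  | succ n ih =>
    intro m hm
    obtain ⟨m', rfl⟩ : ∃ m', m = m' + 1 := ⟨m - 1, by omega⟩
    rw [ec_rec, ih _ (by omega), ih _ (by omega)]
    ring

lemma ec_top : ∀ n : ℕ, ec n n = qq ^ (n * (n + 1) / 2) := by
  intro n
  induction n with
  | zero => simpa using ec_zero 0
  | succ n ih =>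
    rw [ec_rec, ih, ec_gt n (n + 1) (by omega), ← pow_add, tri_succ]
    ring

lemma qPoch_succ (m : ℕ) :
    qPoch (m + 1) = qPoch m * (1 - (PowerSeries.X : PowerSeries ℚ) ^ (m + 1)) := by
  rw [qPoch, Finset.prod_range_succ, ← qPoch]

lemma euler_key : ∀ m k : ℕ, ec (m + k) m * qPoch m
    = qq ^ (m * (m + 1) / 2) * ∏ i ∈ Finset.range m, (1 - qq ^ (k + 1 + i)) := by
  intro m
  induction m with
  | zero => intro k; simp [ec_zero, qPoch]
  | succ m ihm =>
    intro k
    induction k with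
    | zero =>
      rw [show m + 1 + 0 = m + 1 by ring, ec_top]
      congr 1
      rw [qPoch]
      apply Finset.prod_congr rfl
      intro i _
      simp only [qq]
      ring_nf
    | succ k ihk =>
      have hrec : ec (m + 1 + (k + 1)) (m + 1)
          = ec (m + k + 1) (m + 1) + qq ^ (m + k + 2) * ec (m + k + 1) m := by
        rw [show m + 1 + (k + 1) = (m + k + 1) + 1 by ring, ec_rec]
      have h1 : ec (m + k + 1) (m + 1) * qPoch (m + 1)
          = qq ^ ((m + 1) * (m + 1 + 1) / 2) * ∏ i ∈ Finset.range (m + 1), (1 - qq ^ (k + 1 + i)) := by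
        rw [show m + k + 1 = m + 1 + k by ring]; exact ihk
      have h2 : ec (m + k + 1) m * qPoch m
          = qq ^ (m * (m + 1) / 2) * ∏ i ∈ Finset.range m, (1 - qq ^ (k + 2 + i)) := by
        rw [show m + k + 1 = m + (k + 1) by ring, ihm (k + 1)]
      have hB1 : ∏ i ∈ Finset.range (m + 1), (1 - qq ^ (k + 1 + i))
          = (1 - qq ^ (k + 1)) * ∏ i ∈ Finset.range m, (1 - qq ^ (k + 2 + i)) := by
        have e1 : ∀ i, k + 1 + (i + 1) = k + 2 + i := fun i => by omega
        rw [Finset.prod_range_succ']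
        simp only [e1, Nat.add_zero]
        ring
      have hB2 : ∏ i ∈ Finset.range (m + 1), (1 - qq ^ (k + 1 + 1 + i))
          = (∏ i ∈ Finset.range m, (1 - qq ^ (k + 2 + i))) * (1 - qq ^ (k + 2 + m)) := by
        rw [Finset.prod_range_succ]
      have ht : qq ^ ((m + 1) * (m + 1 + 1) / 2)
          = qq ^ (m + 1) * qq ^ (m * (m + 1) / 2) := by
        rw [← pow_add, tri_succ]
        ring
      have hX : (PowerSeries.X : PowerSeries ℚ) = qq := rfl
      rw [hrec, add_mul, h1, hB1, qPoch_succ, hX, hB2, ht]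
      linear_combination (qq ^ (m + k + 2) * (1 - qq ^ (m + 1))) * h2

lemma ec_stab (m N : ℕ) : ∀ n : ℕ, N < n →
    PowerSeries.coeff (R := ℚ) N (ec n m) = PowerSeries.coeff (R := ℚ) N (ec (N + 1) m) := by
  intro n
  induction n with
  | zero => omega
  | succ n ih =>
    intro hn
    rcases Nat.lt_or_ge N n with h | h
    · rw [← ih h]
      cases m with
      | zero => rw [ec_zero, ec_zero]
      | succ m =>
        rw [ec_rec, map_add]
        have hz : PowerSeries.coeff (R := ℚ) N (qq ^ (n + 1) * ec n m) = 0 := by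
          have hdvd : (PowerSeries.X : PowerSeries ℚ) ^ (n + 1) ∣ qq ^ (n + 1) * ec n m :=
            ⟨ec n m, rfl⟩
          exact (PowerSeries.X_pow_dvd_iff.mp hdvd) N (by omega)
        rw [hz, add_zero]
    · have : n = N := by omega
      subst this
      rfl

lemma tail_dvd (N : ℕ) : ∀ m : ℕ, (PowerSeries.X : PowerSeries ℚ) ^ (N + 2) ∣
    (∏ i ∈ Finset.range m, (1 - qq ^ (N + 2 + i))) - 1 := by
  intro m
  induction m with
  | zero => simp
  | succ m ih =>
    rw [Finset.prod_range_succ]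
    have heq : (∏ i ∈ Finset.range m, (1 - qq ^ (N + 2 + i))) * (1 - qq ^ (N + 2 + m)) - 1
        = ((∏ i ∈ Finset.range m, (1 - qq ^ (N + 2 + i))) - 1) * (1 - qq ^ (N + 2 + m))
          - qq ^ (N + 2 + m) := by ring
    rw [heq]
    apply dvd_sub
    · exact ih.mul_right _
    · exact ⟨X ^ m, by rw [← pow_add]; rfl⟩

lemma qPoch_const (m : ℕ) : PowerSeries.constantCoeff (R := ℚ) (qPoch m) = 1 := by
  rw [qPoch, map_prod]
  apply Finset.prod_eq_one
  intro i _
  simp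

/-- Euler's identity: `(-xq;q)_∞ = ∑_{m ≥ 0} q^{m(m+1)/2} x^m / (q;q)_m`. -/
theorem euler_identity :
    eulerProd = PowerSeries.mk fun m => qq ^ (m * (m + 1) / 2) * (qPoch m)⁻¹ := by
  apply PowerSeries.ext
  intro m
  apply PowerSeries.ext
  intro N
  have hL : PowerSeries.coeff (R := ℚ) N (PowerSeries.coeff (R := PowerSeries ℚ) m eulerProd)
      = PowerSeries.coeff (R := ℚ) N (ec (N + 1) m) := by
    simp [eulerProd, ec, eulerP]
  rw [hL, PowerSeries.coeff_mk]
  have hstab := ec_stab m N (m + (N + 1)) (by omega)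
  rw [← hstab]
  have hconst : PowerSeries.constantCoeff (R := ℚ) (qPoch m) ≠ 0 := by
    rw [qPoch_const]; exact one_ne_zero
  have hec : ec (m + (N + 1)) m
      = qq ^ (m * (m + 1) / 2) * (∏ i ∈ Finset.range m, (1 - qq ^ (N + 1 + 1 + i))) * (qPoch m)⁻¹ := by
    rw [PowerSeries.eq_mul_inv_iff_mul_eq hconst]
    exact euler_key m (N + 1)
  rw [hec]
  have hprod : ∏ i ∈ Finset.range m, (1 - qq ^ (N + 1 + 1 + i))
      = ∏ i ∈ Finset.range m, (1 - qq ^ (N + 2 + i)) := rfl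
  have hz : PowerSeries.coeff (R := ℚ) N
      (qq ^ (m * (m + 1) / 2) * (∏ i ∈ Finset.range m, (1 - qq ^ (N + 1 + 1 + i))) * (qPoch m)⁻¹
        - qq ^ (m * (m + 1) / 2) * (qPoch m)⁻¹) = 0 := by
    have hdiff : qq ^ (m * (m + 1) / 2) * (∏ i ∈ Finset.range m, (1 - qq ^ (N + 1 + 1 + i))) * (qPoch m)⁻¹
        - qq ^ (m * (m + 1) / 2) * (qPoch m)⁻¹
        = (qq ^ (m * (m + 1) / 2) * (qPoch m)⁻¹)
          * ((∏ i ∈ Finset.range m, (1 - qq ^ (N + 1 + 1 + i))) - 1) := by ring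
    rw [hdiff, hprod]
    have hdvd : (PowerSeries.X : PowerSeries ℚ) ^ (N + 2) ∣
        (qq ^ (m * (m + 1) / 2) * (qPoch m)⁻¹)
          * ((∏ i ∈ Finset.range m, (1 - qq ^ (N + 2 + i))) - 1) :=
      (tail_dvd N m).mul_left _
    exact (PowerSeries.X_pow_dvd_iff.mp hdvd) N (by omega)
  rw [map_sub] at hz
  exact sub_eq_zero.mp hz
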